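/- Let γ be the W-curve γ(s) = (a cos s, a sin s, b cos s, b sin s)-type generator with parameters a,b and c = d = 1, with constant first curvature κ₁. If the marching-scale functions are A(t) = -(aκ₁(r(t)cos t - a) + bκ₁(r(t)sin t - b))/(a²+b²) and B(t) = (bκ₁(r(t)cos t - a) - aκ₁(r(t)sin t - b))/(a²+b²), then the surface pencil X(s,t) = γ(s) + A(t)V₂(s) + B(t)V₄(s) coincides with the Vranceanu surface X(s,t) = (r(t)cos t cos s, r(t)cos t sin s, r(t)sin t cos s, r(t)sin t sin s). -/

import Mathlib

open Real

/-- For the W-curve `γ(s) = (a cos s, a sin s, b cos s, b sin s)` with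
`a² + b² = 1` and the marching-scale functions
`A(t) = -(aκ₁(r cos t - a) + bκ₁(r sin t - b))/(a²+b²)`,
`B(t) = (bκ₁(r cos t - a) - aκ₁(r sin t - b))/(a²+b²)`,
the surface pencil coincides with the Vranceanu surface
`(r cos t cos s, r cos t sin s, r sin t cos s, r sin t sin s)`. -/
theorem surface_pencil_vranceanu
    (a b : ℝ) (ha : 0 < a) (hb : 0 < b) (hunit : a ^ 2 + b ^ 2 = 1)
    (γ V₂ V₄ : ℝ → EuclideanSpace ℝ (Fin 4))
    (hγ : ∀ s, γ s = ![a * cos s, a * sin s, b * cos s, b * sin s])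
    (κ₁ : ℝ) (hκ₁ : κ₁ = Real.sqrt (a ^ 2 + b ^ 2))
    -- the normal and second binormal of the Frenet frame of γ
    (hV₂ : ∀ s, V₂ s = (-κ₁⁻¹) • γ s)
    (hV₄ : ∀ s, V₄ s = κ₁⁻¹ • (WithLp.toLp 2 ![b * cos s, b * sin s, -a * cos s, -a * sin s] :
      EuclideanSpace ℝ (Fin 4)))
    (r A B : ℝ → ℝ)
    (hA : ∀ t, A t = -(a * κ₁ * (r t * cos t - a) + b * κ₁ * (r t * sin t - b)) /
      (a ^ 2 + b ^ 2))
    (hB : ∀ t, B t = (b * κ₁ * (r t * cos t - a) - a * κ₁ * (r t * sin t - b)) /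
      (a ^ 2 + b ^ 2)) :
    ∀ s t, γ s + A t • V₂ s + B t • V₄ s =
      ![r t * cos t * cos s, r t * cos t * sin s, r t * sin t * cos s, r t * sin t * sin s] := by
  have hk : κ₁ = 1 := by rw [hκ₁, hunit, Real.sqrt_one]
  intro s t
  funext i
  have h1 : ((γ s).ofLp + A t • (V₂ s).ofLp + B t • (V₄ s).ofLp) i = γ s i + A t * V₂ s i + B t * V₄ s i := rfl
  rw [h1, hV₂, hV₄, PiLp.smul_apply, PiLp.smul_apply, hγ, hA, hB, hk, hunit]
  simp only [PiLp.smul_apply, smul_eq_mul, WithLp.ofLp_toLp]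
  fin_cases i <;>
    norm_num [Matrix.cons_val_zero, Matrix.cons_val_one, Matrix.head_cons, Fin.isValue,
      Matrix.cons_val_two, Matrix.cons_val_three, Matrix.tail_cons, Fin.mk_zero, Fin.mk_one] <;>
    first
      | linear_combination (cos s * r t * cos t - a * cos s) * hunit
      | linear_combination (sin s * r t * cos t - a * sin s) * hunit
      | linear_combination (cos s * r t * sin t - b * cos s) * hunit
      | linear_combination (sin s * r t * sin t - b * sin s) * hunit
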